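/- Let p be a prime number, R a commutative ring, and ξ ∈ R a nilpotent element. Assume that every finitely generated p-torsion-free module over the quotient ring R/(ξ) is finitely presented as an R/(ξ)-module. Then every finitely generated p-torsion-free R-module is finitely presented as an R-module. -/

import Mathlib

universe u

/-- Transfer of finite presentation along a surjective base ring map with
finitely generated kernel. -/
lemma finitePresentation_of_algebra_surjective
    {R S : Type u} [CommRing R] [CommRing S] [Algebra R S]
    (hsurj : Function.Surjective (algebraMap R S))
    (hker : (RingHom.ker (algebraMap R S)).FG)
    (M : Type u) [AddCommGroup M] [Module R M] [Module S M] [IsScalarTower R S M]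
    [Module.Finite R M] (hfp : Module.FinitePresentation S M) :
    Module.FinitePresentation R M := by
  classical
  haveI := hfp
  obtain ⟨n, s, hs⟩ := Module.Finite.exists_fin (R := R) (M := M)
  let π : (Fin n → R) →ₗ[R] M := Fintype.linearCombination R s
  have hπ : Function.Surjective π := by
    rw [← LinearMap.range_eq_top, Fintype.range_linearCombination, hs]
  let πS : (Fin n → S) →ₗ[S] M := Fintype.linearCombination S s
  let q : (Fin n → R) →ₗ[R] (Fin n → S) :=
    LinearMap.pi fun i => (Algebra.linearMap R S).comp (LinearMap.proj i)
  have hq : Function.Surjective q := by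
    intro w
    refine ⟨fun i => (hsurj (w i)).choose, funext fun i => ?_⟩
    exact (hsurj (w i)).choose_spec
  have hcomp : (πS.restrictScalars R).comp q = π := by
    ext v
    simp only [LinearMap.coe_comp, Function.comp_apply, LinearMap.coe_restrictScalars,
      Fintype.linearCombination_apply, π, πS, q, LinearMap.pi_apply,
      Algebra.linearMap_apply, LinearMap.proj_apply, algebraMap_smul]
  have hπS : Function.Surjective πS := by
    have : Function.Surjective ((πS.restrictScalars R).comp q) := by rw [hcomp]; exact hπ
    exact Function.Surjective.of_comp this
  have hK : (LinearMap.ker πS).FG := Module.FinitePresentation.fg_ker πS hπS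
  have hKR : ((LinearMap.ker πS).restrictScalars R).FG :=
    Submodule.fg_restrictScalars hK hsurj
  -- kernel of q is finitely generated
  have hkerq : (LinearMap.ker q).FG := by
    have hq' : LinearMap.ker q
        = Submodule.pi Set.univ fun _ : Fin n =>
            (RingHom.ker (algebraMap R S)).restrictScalars R := by
      ext v
      simp only [LinearMap.mem_ker, Submodule.mem_pi, Set.mem_univ, forall_true_left,
        Submodule.restrictScalars_mem, RingHom.mem_ker]
      constructor
      · intro h i
        exact congrFun h i
      · intro h
        funext i
        simpa [q] using h i
    rw [hq']
    exact Submodule.fg_pi fun _ => hker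
  have hkerπ : (LinearMap.ker π).FG := by
    have hle : LinearMap.ker π = Submodule.comap q ((LinearMap.ker πS).restrictScalars R) := by
      rw [← hcomp, LinearMap.ker_comp]
      rfl
    rw [hle]
    apply Submodule.fg_of_fg_map_of_fg_inf_ker q
    · rw [Submodule.map_comap_eq, LinearMap.range_eq_top.mpr hq, top_inf_eq]
      exact hKR
    · have hsub : LinearMap.ker q ≤ Submodule.comap q ((LinearMap.ker πS).restrictScalars R) := by
        intro x hx
        simp only [Submodule.mem_comap, Submodule.restrictScalars_mem, LinearMap.mem_ker] at hx ⊢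
        rw [hx]
        exact map_zero _
      rw [inf_eq_right.mpr hsub]
      exact hkerq
  exact Module.finitePresentation_of_surjective π hπ hkerπ

/-- Let `p` be a prime, `R` a commutative ring and `ξ ∈ R` nilpotent.
If every finitely generated `p`-torsion-free module over `R ⧸ (ξ)` is finitely presented
over `R ⧸ (ξ)`, then every finitely generated `p`-torsion-free `R`-module is finitely
presented over `R`. -/
theorem fg_pTorsionFree_finitePresentation_of_quotient_nilpotent
    (p : ℕ) (hp : p.Prime) (R : Type u) [CommRing R] (ξ : R) (hξ : IsNilpotent ξ)
    (hquot : ∀ (M : Type u) [AddCommGroup M] [Module (R ⧸ Ideal.span {ξ}) M],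
      Module.Finite (R ⧸ Ideal.span {ξ}) M →
      Function.Injective (fun m : M => (p : R ⧸ Ideal.span {ξ}) • m) →
      Module.FinitePresentation (R ⧸ Ideal.span {ξ}) M) :
    ∀ (M : Type u) [AddCommGroup M] [Module R M],
      Module.Finite R M →
      Function.Injective (fun m : M => (p : R) • m) →
      Module.FinitePresentation R M := by
  classical
  obtain ⟨e, he⟩ := hξ
  set I : Ideal R := Ideal.span {ξ} with hI
  have key : ∀ (k : ℕ) (M : Type u) [AddCommGroup M] [Module R M],
      Module.Finite R M →
      Function.Injective (fun m : M => (p : R) • m) →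
      (∀ m : M, ξ ^ k • m = 0) →
      Module.FinitePresentation R M := by
    intro k
    induction k with
    | zero =>
      intro M _ _ hfin _ htor
      have hsub : ∀ m : M, m = 0 := by
        intro m
        simpa using htor m
      have hsurj0 : Function.Surjective (0 : (Fin 0 → R) →ₗ[R] M) := by
        intro m
        exact ⟨0, by rw [hsub m]; rfl⟩
      refine Module.finitePresentation_of_surjective (0 : (Fin 0 → R) →ₗ[R] M) hsurj0 ?_
      have : LinearMap.ker (0 : (Fin 0 → R) →ₗ[R] M) = ⊤ := LinearMap.ker_zero
      rw [this]
      exact Module.Finite.fg_top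
    | succ k ih =>
      intro M _ _ hfin hpinj htor
      set l : M →ₗ[R] M := LinearMap.lsmul R M ξ with hl
      set N : Submodule R M := LinearMap.range l with hN
      -- `N = ξ M` is finitely generated, `p`-torsion-free and killed by `ξ ^ k`
      have hNpinj : Function.Injective (fun m : N => (p : R) • m) := by
        intro x y hxy
        apply Subtype.ext
        apply hpinj
        simpa using congrArg (Subtype.val) hxy
      have hNtor : ∀ m : N, ξ ^ k • m = 0 := by
        rintro ⟨-, m, rfl⟩
        apply Subtype.ext
        show ξ ^ k • l m = 0
        simp only [hl, LinearMap.lsmul_apply, ← smul_assoc, smul_eq_mul, ← pow_succ]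
        exact htor m
      have hNfp : Module.FinitePresentation R N := ih N inferInstance hNpinj hNtor
      haveI := hNfp
      set l' : M →ₗ[R] N := l.rangeRestrict with hl'
      have hl'surj : Function.Surjective l' := l.surjective_rangeRestrict
      -- `K = M[ξ]` is finitely generated
      set K : Submodule R M := LinearMap.ker l' with hK
      have hKfg : K.FG := Module.FinitePresentation.fg_ker l' hl'surj
      haveI hKfin : Module.Finite R K := Module.Finite.iff_fg.mpr hKfg
      -- `K` is killed by `ξ`, hence a module over `R ⧸ I`
      have hKtor : Module.IsTorsionBySet R K (I : Set R) := by
        rw [hI, Ideal.submodule_span_eq.symm]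
        refine (Module.isTorsionBySet_span_singleton_iff ξ).mpr ?_
        rintro ⟨m, hm⟩
        apply Subtype.ext
        show ξ • m = 0
        have : l m = 0 := by
          have := congrArg (Subtype.val) ((LinearMap.mem_ker.mp hm : l' m = 0))
          simpa [hl'] using this
        simpa [hl] using this
      letI : Module (R ⧸ I) K := hKtor.module
      haveI : IsScalarTower R (R ⧸ I) K := hKtor.isScalarTower
      haveI hKfinQ : Module.Finite (R ⧸ I) K :=
        Module.Finite.of_restrictScalars_finite R (R ⧸ I) K
      have hKpinjQ : Function.Injective (fun m : K => (p : R ⧸ I) • m) := by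
        intro x y hxy
        have hp' : (p : R ⧸ I) = algebraMap R (R ⧸ I) (p : R) := by
          rw [map_natCast]
        simp only [hp', algebraMap_smul] at hxy
        apply Subtype.ext
        apply hpinj
        simpa using congrArg (Subtype.val) hxy
      have hKfpQ : Module.FinitePresentation (R ⧸ I) K := hquot K hKfinQ hKpinjQ
      -- transfer finite presentation of `K` from `R ⧸ I` down to `R`
      have hkerfg : (RingHom.ker (algebraMap R (R ⧸ I))).FG := by
        rw [Ideal.Quotient.algebraMap_eq, Ideal.mk_ker]
        exact ⟨{ξ}, by simp [hI]⟩
      have hKfp : Module.FinitePresentation R K :=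
        finitePresentation_of_algebra_surjective
          (Ideal.Quotient.mk_surjective (I := I)) hkerfg K hKfpQ
      haveI : Module.FinitePresentation R (LinearMap.ker l') := hKfp
      exact Module.finitePresentation_of_ker l' hl'surj
  intro M _ _ hfin hpinj
  refine key e M hfin hpinj fun m => ?_
  rw [he, zero_smul]
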